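/- Let d ≥ 1, let v : Fin N → ℝ^d be a family of voter ideal points, and let I be a subset of Fin N. Then I is EDP-allowed if and only if there exist a nonzero vector w ∈ ℝ^d and a constant c ∈ ℝ such that ⟪w, v i⟫ < c for all i ∈ I and ⟪w, v j⟫ > c for all j ∉ I; that is, the EDP-allowed coalitions are exactly the subsets of voters whose ideal points can be strictly separated from the remaining ideal points by a hyperplane in ℝ^d. -/
import Mathlib


open RealInnerProductSpace

/-- A coalition `I` is **EDP-allowed**: there exist outcome points `p, q` in Euclidean
space such that every voter in `I` is strictly closer to `p` and every voter outside
`I` is strictly closer to `q`. -/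
def EDPAllowed {d N : ℕ} (v : Fin N → EuclideanSpace ℝ (Fin d)) (I : Set (Fin N)) : Prop :=
  ∃ p q : EuclideanSpace ℝ (Fin d),
    (∀ i ∈ I, dist (v i) p < dist (v i) q) ∧ (∀ j ∉ I, dist (v j) q < dist (v j) p)

lemma edp_key {d : ℕ} (x p q : EuclideanSpace ℝ (Fin d)) :
    dist x p < dist x q ↔ 2 * ⟪q - p, x⟫ < ‖q‖ ^ 2 - ‖p‖ ^ 2 := by
  have e1 : dist x p ^ 2 = ‖x‖ ^ 2 - 2 * ⟪x, p⟫ + ‖p‖ ^ 2 := by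
    rw [dist_eq_norm]; exact norm_sub_sq_real x p
  have e2 : dist x q ^ 2 = ‖x‖ ^ 2 - 2 * ⟪x, q⟫ + ‖q‖ ^ 2 := by
    rw [dist_eq_norm]; exact norm_sub_sq_real x q
  have e3 : ⟪q - p, x⟫ = ⟪x, q⟫ - ⟪x, p⟫ := by
    rw [inner_sub_left, real_inner_comm q x, real_inner_comm p x]
  constructor
  · intro h
    have h2 : dist x p ^ 2 < dist x q ^ 2 := by
      have := dist_nonneg (x := x) (y := p)
      nlinarith
    nlinarith
  · intro h
    have h2 : dist x p ^ 2 < dist x q ^ 2 := by nlinarith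
    exact lt_of_pow_lt_pow_left₀ 2 dist_nonneg h2

/-- A coalition is EDP-allowed iff its ideal points can be strictly separated from the
remaining ideal points by a hyperplane `{x : ⟪w, x⟫ = c}` in `ℝ^d`. -/
theorem edp_allowed_iff_hyperplane_separated (d N : ℕ) (hd : 1 ≤ d)
    (v : Fin N → EuclideanSpace ℝ (Fin d)) (I : Set (Fin N)) :
    EDPAllowed v I ↔
      ∃ w : EuclideanSpace ℝ (Fin d), w ≠ 0 ∧ ∃ c : ℝ,
        (∀ i ∈ I, ⟪w, v i⟫ < c) ∧ (∀ j ∉ I, ⟪w, v j⟫ > c) := by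
  constructor
  · rintro ⟨p, q, h1, h2⟩
    by_cases hpq : p = q
    · -- every voter leads to a contradiction, so conditions are vacuous
      have hfalse : ∀ i : Fin N, False := by
        intro i
        by_cases hi : i ∈ I
        · exact absurd (h1 i hi) (by rw [hpq]; exact lt_irrefl _)
        · exact absurd (h2 i hi) (by rw [hpq]; exact lt_irrefl _)
      haveI : Nonempty (Fin d) := ⟨⟨0, hd⟩⟩
      obtain ⟨w, hw⟩ := exists_ne (0 : EuclideanSpace ℝ (Fin d))
      exact ⟨w, hw, 0, fun i _ => absurd (hfalse i) not_false,
        fun j _ => absurd (hfalse j) not_false⟩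
    · refine ⟨q - p, sub_ne_zero.mpr (Ne.symm hpq), (‖q‖ ^ 2 - ‖p‖ ^ 2) / 2, ?_, ?_⟩
      · intro i hi
        have := (edp_key (v i) p q).mp (h1 i hi)
        linarith
      · intro j hj
        have := (edp_key (v j) q p).mp (h2 j hj)
        have e : ⟪p - q, v j⟫ = -⟪q - p, v j⟫ := by
          rw [← inner_neg_left, neg_sub]
        rw [e] at this
        linarith
  · rintro ⟨w, hw, c, h1, h2⟩
    have hwn : ‖w‖ ^ 2 ≠ 0 := by
      simpa using pow_ne_zero 2 (norm_ne_zero_iff.mpr hw)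
    set t : ℝ := (2 * c / ‖w‖ ^ 2 - 1) / 2 with ht
    have hsub : (t + 1) • w - t • w = w := by
      rw [← sub_smul]; ring_nf; rw [one_smul]
    have hn1 : ‖(t + 1) • w‖ ^ 2 = (t + 1) ^ 2 * ‖w‖ ^ 2 := by
      rw [norm_smul, mul_pow, Real.norm_eq_abs, sq_abs]
    have hn2 : ‖t • w‖ ^ 2 = t ^ 2 * ‖w‖ ^ 2 := by
      rw [norm_smul, mul_pow, Real.norm_eq_abs, sq_abs]
    have hc : ‖(t + 1) • w‖ ^ 2 - ‖t • w‖ ^ 2 = 2 * c := by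
      rw [hn1, hn2, ht]; field_simp; ring
    refine ⟨t • w, (t + 1) • w, ?_, ?_⟩
    · intro i hi
      rw [edp_key, hsub, hc]
      have := h1 i hi; linarith
    · intro j hj
      rw [edp_key]
      have hsub' : t • w - (t + 1) • w = -w := by
        rw [← neg_sub ((t+1) • w), hsub]
      rw [hsub', inner_neg_left]
      have := h2 j hj; linarith
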